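/- arXiv:2402.16672 — 2 statements merged into one kernel-verified Lean document; each statement's English description precedes it below -/
import Mathlib

section
/- If (f_s) is a well structured vector name of a point a in a compact metrizable space X (i.e., each f_s ∈ C(X;[0,1]), {a} = ⋂_s f_s⁻¹(1/2,∞), f_{s+1}⁻¹(1/4,∞) ⊆ f_s⁻¹(2/3,∞), and ‖f_s‖ ≤ 2/3 + 2^{-s}), and g ∈ C(X;[0,1]), then the following are equivalent: (1) there exists s with ‖f_s·(1−g)‖ < 1/3; (2) g(a) > 1/2; (3) ‖f_s·(1−g)‖ < 1/3 for all sufficiently large s. -/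
open Set Filter

theorem stmt0 {X : Type*} [TopologicalSpace X] [CompactSpace X]
    [TopologicalSpace.MetrizableSpace X]
    (f : ℕ → C(X, ℝ)) (a : X)
    (hrange : ∀ s, ∀ x, f s x ∈ Set.Icc (0:ℝ) 1)
    (hname : ({a} : Set X) = ⋂ s, (f s) ⁻¹' Set.Ioi (1/2 : ℝ))
    (hnest : ∀ s, (f (s+1)) ⁻¹' Set.Ioi (1/4 : ℝ) ⊆ (f s) ⁻¹' Set.Ioi (2/3 : ℝ))
    (hnorm : ∀ s, ‖f s‖ ≤ 2/3 + (1/2 : ℝ)^s)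
    (g : C(X, ℝ)) (hg : ∀ x, g x ∈ Set.Icc (0:ℝ) 1) :
    ((∃ s, ‖f s * (1 - g)‖ < 1/3) ↔ g a > 1/2) ∧
    (g a > 1/2 ↔ ∀ᶠ s in atTop, ‖f s * (1 - g)‖ < 1/3) := by
  -- a belongs to each level set
  have ha : ∀ s, f s a > 1/2 := by
    intro s
    have : a ∈ ⋂ s, (f s) ⁻¹' Set.Ioi (1/2 : ℝ) := by
      rw [← hname]; exact rfl
    exact Set.mem_iInter.1 this s
  have ha2 : ∀ s, f s a > 2/3 := by
    intro s
    have : a ∈ (f (s+1)) ⁻¹' Set.Ioi (1/4 : ℝ) := by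
      have := ha (s+1); simp only [Set.mem_preimage, Set.mem_Ioi]; linarith
    exact hnest s this
  -- (1) → (2)
  have h12 : (∃ s, ‖f s * (1 - g)‖ < 1/3) → g a > 1/2 := by
    rintro ⟨s, hs⟩
    have hle : ‖(f s * (1 - g)) a‖ ≤ ‖f s * (1 - g)‖ :=
      ContinuousMap.norm_coe_le_norm _ a
    have hval : (f s * (1 - g)) a = f s a * (1 - g a) := by simp
    rw [hval] at hle
    have hga1 : g a ≤ 1 := (hg a).2
    have h1 : f s a * (1 - g a) ≤ ‖f s a * (1 - g a)‖ := le_abs_self _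
    have h2 : f s a * (1 - g a) < 1/3 := lt_of_le_of_lt (h1.trans hle) hs
    by_contra hc
    push_neg at hc
    have := ha2 s
    nlinarith
  -- (2) → (3)
  have h23 : g a > 1/2 → ∀ᶠ s in atTop, ‖f s * (1 - g)‖ < 1/3 := by
    intro hga
    set t : ℝ := (1/2 + g a) / 2 with ht
    have ht1 : 1/2 < t := by rw [ht]; linarith
    have ht2 : t < g a := by rw [ht]; linarith
    have ht3 : t < 1 := lt_of_lt_of_le ht2 (hg a).2
    -- decreasing closed sets
    set E : ℕ → Set X := fun s => (f s) ⁻¹' Set.Ici (3/10 : ℝ) with hE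
    have hEsucc : ∀ s, E (s+1) ⊆ E s := by
      intro s x hx
      have hx' : x ∈ (f (s+1)) ⁻¹' Set.Ioi (1/4 : ℝ) := by
        simp only [hE, Set.mem_preimage, Set.mem_Ici] at hx
        simp only [Set.mem_preimage, Set.mem_Ioi]; linarith
      have := hnest s hx'
      simp only [Set.mem_preimage, Set.mem_Ioi] at this
      simp only [hE, Set.mem_preimage, Set.mem_Ici]; linarith
    have hEanti : Antitone E := antitone_nat_of_succ_le hEsucc
    have hEclosed : ∀ s, IsClosed (E s) := fun s =>
      (isClosed_Ici).preimage (f s).continuous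
    have hEinter : (⋂ s, E s) ⊆ {a} := by
      intro x hx
      rw [hname]
      apply Set.mem_iInter.2
      intro s
      have hx1 : x ∈ E (s+1) := Set.mem_iInter.1 hx (s+1)
      have hx' : x ∈ (f (s+1)) ⁻¹' Set.Ioi (1/4 : ℝ) := by
        simp only [hE, Set.mem_preimage, Set.mem_Ici] at hx1
        simp only [Set.mem_preimage, Set.mem_Ioi]; linarith
      have := hnest s hx'
      simp only [Set.mem_preimage, Set.mem_Ioi] at this ⊢
      linarith
    -- open neighborhood U of a
    set U : Set X := g ⁻¹' Set.Ioi t with hU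
    have haU : a ∈ U := by simp only [hU, Set.mem_preimage, Set.mem_Ioi]; exact ht2
    -- find s0 with E s0 ⊆ U
    have hEU : ∃ s0, E s0 ⊆ U := by
      by_contra hc
      push_neg at hc
      have hK : ∀ s, (E s ∩ Uᶜ).Nonempty := by
        intro s
        obtain ⟨x, hx1, hx2⟩ := Set.not_subset.1 (hc s)
        exact ⟨x, hx1, hx2⟩
      have hKdir : Directed (· ⊇ ·) (fun s => E s ∩ Uᶜ) := by
        intro s s'
        refine ⟨max s s', ?_, ?_⟩
        · exact Set.inter_subset_inter_left _ (hEanti (le_max_left s s'))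
        · exact Set.inter_subset_inter_left _ (hEanti (le_max_right s s'))
      have hUopen : IsOpen U := (isOpen_Ioi).preimage g.continuous
      have hKclosed : ∀ s, IsClosed (E s ∩ Uᶜ) :=
        fun s => (hEclosed s).inter hUopen.isClosed_compl
      have hKcompact : ∀ s, IsCompact (E s ∩ Uᶜ) :=
        fun s => (hKclosed s).isCompact
      obtain ⟨x, hx⟩ := IsCompact.nonempty_iInter_of_directed_nonempty_isCompact_isClosed
        (fun s => E s ∩ Uᶜ) hKdir hK hKcompact hKclosed
      have hx1 : x ∈ ⋂ s, E s := Set.mem_iInter.2 fun s => (Set.mem_iInter.1 hx s).1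
      have hx2 : x ∈ Uᶜ := (Set.mem_iInter.1 hx 0).2
      have : x = a := hEinter hx1
      exact hx2 (this ▸ haU)
    obtain ⟨s0, hs0⟩ := hEU
    -- eventually (1/2)^s small
    have hpow : Tendsto (fun s : ℕ => (1/2 : ℝ)^s) atTop (nhds 0) :=
      tendsto_pow_atTop_nhds_zero_of_lt_one (by norm_num) (by norm_num)
    have hev1 : ∀ᶠ s in atTop, (1/2 : ℝ)^s < (2*t - 1)/3 := by
      have hpos : (0:ℝ) < (2*t - 1)/3 := by linarith
      exact hpow.eventually_lt_const hpos
    have hev2 : ∀ᶠ s in atTop, s0 ≤ s := eventually_ge_atTop s0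
    filter_upwards [hev1, hev2] with s hs1 hs2
    rw [ContinuousMap.norm_lt_iff _ (by norm_num : (0:ℝ) < 1/3)]
    intro x
    have hval : (f s * (1 - g)) x = f s x * (1 - g x) := by simp
    rw [hval]
    have hfx0 : 0 ≤ f s x := (hrange s x).1
    have hgx0 : 0 ≤ g x := (hg x).1
    have hgx1 : g x ≤ 1 := (hg x).2
    have habs : ‖f s x * (1 - g x)‖ = f s x * (1 - g x) := by
      rw [Real.norm_eq_abs, abs_of_nonneg]
      exact mul_nonneg hfx0 (by linarith)
    rw [habs]
    by_cases hcase : (3/10 : ℝ) ≤ f s x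
    · -- x ∈ E s ⊆ E s0 ⊆ U
      have hxE : x ∈ E s := hcase
      have hxU : x ∈ U := hs0 (hEanti hs2 hxE)
      have hgx : t < g x := hxU
      have hfsbd : f s x ≤ 2/3 + (1/2:ℝ)^s := by
        have h1 : ‖f s x‖ ≤ ‖f s‖ := ContinuousMap.norm_coe_le_norm _ x
        have h2 : f s x ≤ ‖f s x‖ := le_abs_self _
        linarith [hnorm s]
      have hpe : (0:ℝ) < (1/2:ℝ)^s := by positivity
      nlinarith
    · push_neg at hcase
      nlinarith
  -- (3) → (1)
  have h31 : (∀ᶠ s in atTop, ‖f s * (1 - g)‖ < 1/3) → ∃ s, ‖f s * (1 - g)‖ < 1/3 :=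
    fun h => h.exists
  exact ⟨⟨h12, fun h => h31 (h23 h)⟩, ⟨h23, fun h => h12 (h31 h)⟩⟩
end

section
/- If (f_s) is a well structured vector name of a ∈ X and g ∈ C(X;[0,1]) satisfies g(a) > 1/2, then ‖f_s·(1−g)‖ < 1/3 for all sufficiently large s. -/
open Set Filter

theorem stmt2 {X : Type*} [TopologicalSpace X] [CompactSpace X]
    [TopologicalSpace.MetrizableSpace X]
    (f : ℕ → C(X, ℝ)) (a : X)
    (hrange : ∀ s, ∀ x, f s x ∈ Set.Icc (0:ℝ) 1)
    (hname : ({a} : Set X) = ⋂ s, (f s) ⁻¹' Set.Ioi (1/2 : ℝ))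
    (hnest : ∀ s, (f (s+1)) ⁻¹' Set.Ioi (1/4 : ℝ) ⊆ (f s) ⁻¹' Set.Ioi (2/3 : ℝ))
    (hnorm : ∀ s, ‖f s‖ ≤ 2/3 + (1/2 : ℝ)^s)
    (g : C(X, ℝ)) (hg : ∀ x, g x ∈ Set.Icc (0:ℝ) 1)
    (h : g a > 1/2) :
    ∀ᶠ s in atTop, ‖f s * (1 - g)‖ < 1/3 := by
  -- threshold
  set c : ℝ := (1/2 + g a) / 2 with hc_def
  have hc1 : (1/2 : ℝ) < c := by simp only [hc_def]; linarith
  have hc2 : c < g a := by simp only [hc_def]; linarith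
  -- step lemma: if f s x ≤ 2/3 then f (s+1) x ≤ 1/4
  have step : ∀ s x, f s x ≤ 2/3 → f (s+1) x ≤ 1/4 := by
    intro s x hx
    by_contra hcon
    push_neg at hcon
    have := hnest s (by simpa using hcon)
    simp only [Set.mem_preimage, Set.mem_Ioi] at this
    linarith
  -- iterated: if f s x ≤ 2/3 then f m x ≤ 1/4 for all m > s
  have iter : ∀ s x, f s x ≤ 2/3 → ∀ m, s < m → f m x ≤ 1/4 := by
    intro s x hx m hm
    induction m, hm using Nat.le_induction with
    | base => exact step s x hx
    | succ n hn ih => exact step n x (by linarith)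
  -- compact set away from a
  set K : Set X := {x | g x ≤ c} with hK_def
  have hKclosed : IsClosed K := isClosed_le g.continuous continuous_const
  have hKcomp : IsCompact K := hKclosed.isCompact
  -- cover of K by complements of F s := {x | 1/2 ≤ f s x}
  set F : ℕ → Set X := fun s => {x | (1/2 : ℝ) ≤ f s x} with hF_def
  have hFclosed : ∀ s, IsClosed (F s) :=
    fun s => isClosed_le continuous_const (f s).continuous
  have hcover : K ⊆ ⋃ s, (F s)ᶜ := by
    intro x hx
    have hxa : x ≠ a := by
      intro hxa; rw [hK_def] at hx; simp only [Set.mem_setOf_eq, hxa] at hx; linarith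
    have : x ∉ (⋂ s, (f s) ⁻¹' Set.Ioi (1/2 : ℝ)) := by
      rw [← hname]; simpa using hxa
    simp only [Set.mem_iInter, Set.mem_preimage, Set.mem_Ioi, not_forall, not_lt] at this
    obtain ⟨s, hs⟩ := this
    have h14 : f (s+1) x ≤ 1/4 := step s x (by linarith)
    exact Set.mem_iUnion.mpr ⟨s+1, by simp [hF_def]; linarith⟩
  obtain ⟨t, ht⟩ := hKcomp.elim_finite_subcover (fun s => (F s)ᶜ)
    (fun s => (hFclosed s).isOpen_compl) hcover
  set s₀ : ℕ := t.sup id with hs0_def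
  -- for x ∈ K and m > s₀, f m x ≤ 1/4
  have hsmall : ∀ x ∈ K, ∀ m, s₀ < m → f m x ≤ 1/4 := by
    intro x hx m hm
    obtain ⟨s, hst, hs⟩ := Set.mem_iUnion₂.mp (ht hx)
    simp only [Set.mem_compl_iff, hF_def, Set.mem_setOf_eq, not_le] at hs
    have hss0 : s ≤ s₀ := Finset.le_sup (f := id) hst
    exact iter s x (by linarith) m (by omega)
  -- eventually the tail of (1/2)^s is small
  have hδ : (0:ℝ) < (2/3) * (c - 1/2) := by nlinarith
  have htail : ∀ᶠ s : ℕ in atTop, (1/2 : ℝ)^s < (2/3) * (c - 1/2) := by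
    exact (tendsto_pow_atTop_nhds_zero_of_lt_one (by norm_num : (0:ℝ) ≤ 1/2)
      (by norm_num : (1/2:ℝ) < 1)).eventually_lt_const hδ
  filter_upwards [eventually_gt_atTop s₀, htail] with s hs hsmalls
  have hbound : ∀ x, ‖(f s * (1 - g)) x‖ < 1/3 := by
    intro x
    have hfx := hrange s x
    have hgx := hg x
    simp only [Set.mem_Icc] at hfx hgx
    have happ : (f s * (1 - g)) x = f s x * (1 - g x) := by
      simp [ContinuousMap.mul_apply, ContinuousMap.sub_apply]
    rw [happ, Real.norm_eq_abs, abs_mul, abs_of_nonneg hfx.1,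
      abs_of_nonneg (by linarith : (0:ℝ) ≤ 1 - g x)]
    by_cases hxK : x ∈ K
    · have h14 := hsmall x hxK s hs
      nlinarith
    · have hgc : c < g x := by
        rw [hK_def] at hxK; simpa using hxK
      have hfs : f s x ≤ 2/3 + (1/2:ℝ)^s := by
        calc f s x ≤ ‖f s‖ :=
              le_trans (le_abs_self _) ((Real.norm_eq_abs _) ▸ (f s).norm_coe_le_norm x)
          _ ≤ 2/3 + (1/2:ℝ)^s := hnorm s
      have hpow : (0:ℝ) < (1/2:ℝ)^s := by positivity
      nlinarith [hsmalls]
  have h3 : (0:ℝ) < 1/3 := by norm_num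
  rw [ContinuousMap.norm_lt_iff _ h3]
  exact hbound
end
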